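/- Polyhedral lemma, deterministic part (Lemma 1(a)). Let A be an m×k real matrix, b ∈ ℝ^m, Σ a k×k real matrix and η ∈ ℝ^k with η'Ση ≠ 0. Define c = Ση (η'Ση)^{-1} and, for z ∈ ℝ^k, r = r(z) = (I_k − cη')z. Define 𝒱⁻(r) = max over indices j with (Ac)_j < 0 of (b_j − (Ar)_j)/(Ac)_j (taken as −∞ if there is no such j), 𝒱⁺(r) = min over j with (Ac)_j > 0 of (b_j − (Ar)_j)/(Ac)_j (taken as +∞ if there is no such j), and 𝒱⁰(r) = min over j with (Ac)_j = 0 of b_j − (Ar)_j (taken as +∞ if there is no such j). Then for every z ∈ ℝ^k, the componentwise inequality Az ≤ b holds if and only if 𝒱⁻(r(z)) ≤ η'z ≤ 𝒱⁺(r(z)) and 𝒱⁰(r(z)) ≥ 0. -/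
import Mathlib


open Matrix

/-- Polyhedral lemma, deterministic part (Lee, Sun, Sun and Taylor (2016), Lemma 5.1).
`𝒱⁻`, `𝒱⁺`, `𝒱⁰` are extended reals: the suprema/infima over empty index sets are
`⊥ = -∞` and `⊤ = +∞` respectively. -/
theorem polyhedral_lemma_deterministic
    (m k : ℕ) (A : Matrix (Fin m) (Fin k) ℝ) (b : Fin m → ℝ)
    (Sig : Matrix (Fin k) (Fin k) ℝ) (η : Fin k → ℝ)
    (hη : η ⬝ᵥ (Sig *ᵥ η) ≠ 0)
    (c : Fin k → ℝ) (hc : c = (η ⬝ᵥ (Sig *ᵥ η))⁻¹ • (Sig *ᵥ η))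
    (r : (Fin k → ℝ) → (Fin k → ℝ)) (hr : ∀ z, r z = z - (η ⬝ᵥ z) • c)
    (Vminus Vplus Vzero : (Fin k → ℝ) → EReal)
    (hVm : ∀ z, Vminus z =
      sSup ((fun j => (((b j - (A *ᵥ (r z)) j) / (A *ᵥ c) j : ℝ) : EReal)) ''
        {j | (A *ᵥ c) j < 0}))
    (hVp : ∀ z, Vplus z =
      sInf ((fun j => (((b j - (A *ᵥ (r z)) j) / (A *ᵥ c) j : ℝ) : EReal)) ''
        {j | 0 < (A *ᵥ c) j}))
    (hV0 : ∀ z, Vzero z =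
      sInf ((fun j => (((b j - (A *ᵥ (r z)) j) : ℝ) : EReal)) ''
        {j | (A *ᵥ c) j = 0})) :
    ∀ z : Fin k → ℝ,
      (∀ j, (A *ᵥ z) j ≤ b j) ↔
        (Vminus z ≤ ((η ⬝ᵥ z : ℝ) : EReal) ∧ ((η ⬝ᵥ z : ℝ) : EReal) ≤ Vplus z ∧
          (0 : EReal) ≤ Vzero z) := by
  intro z
  set t := η ⬝ᵥ z with ht
  have hAr : A *ᵥ (r z) = A *ᵥ z - t • (A *ᵥ c) := by
    rw [hr, mulVec_sub, mulVec_smul]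
  have key : ∀ j, (A *ᵥ z) j = t * (A *ᵥ c) j + (A *ᵥ r z) j := by
    intro j
    simp only [hAr, Pi.sub_apply, Pi.smul_apply, smul_eq_mul]
    ring
  constructor
  · intro h
    refine ⟨?_, ?_, ?_⟩
    · rw [hVm]
      apply sSup_le
      rintro x ⟨j, hj, rfl⟩
      rw [EReal.coe_le_coe_iff]
      have hb := h j
      rw [key j] at hb
      rw [div_le_iff_of_neg hj]
      linarith
    · rw [hVp]
      apply le_sInf
      rintro x ⟨j, hj, rfl⟩
      rw [EReal.coe_le_coe_iff]
      have hb := h j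
      rw [key j] at hb
      rw [le_div_iff₀ hj]
      linarith
    · rw [hV0]
      apply le_sInf
      rintro x ⟨j, hj, rfl⟩
      have hb := h j
      rw [key j] at hb
      simp only [Set.mem_setOf_eq] at hj
      rw [hj, mul_zero, zero_add] at hb
      show (0:EReal) ≤ ((b j - (A *ᵥ r z) j : ℝ) : EReal)
      exact_mod_cast (by linarith : (0:ℝ) ≤ b j - (A *ᵥ r z) j)
  · rintro ⟨h1, h2, h3⟩ j
    rw [key j]
    rcases lt_trichotomy ((A *ᵥ c) j) 0 with hj | hj | hj
    · rw [hVm] at h1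
      have hle : (((b j - (A *ᵥ r z) j) / (A *ᵥ c) j : ℝ) : EReal) ≤
          sSup ((fun j => (((b j - (A *ᵥ (r z)) j) / (A *ᵥ c) j : ℝ) : EReal)) ''
            {j | (A *ᵥ c) j < 0}) := le_sSup ⟨j, hj, rfl⟩
      have := le_trans hle h1
      simp only [EReal.coe_le_coe_iff, div_le_iff_of_neg hj] at this
      linarith
    · rw [hV0] at h3
      have hle : sInf ((fun j => (((b j - (A *ᵥ (r z)) j) : ℝ) : EReal)) ''
            {j | (A *ᵥ c) j = 0}) ≤ (((b j - (A *ᵥ r z) j) : ℝ) : EReal) :=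
        sInf_le ⟨j, hj, rfl⟩
      have := le_trans h3 hle
      simp only [EReal.coe_nonneg] at this
      have h0 : (0:ℝ) ≤ b j - (A *ᵥ r z) j := this
      rw [hj, mul_zero, zero_add]
      linarith
    · rw [hVp] at h2
      have hle : sInf ((fun j => (((b j - (A *ᵥ (r z)) j) / (A *ᵥ c) j : ℝ) : EReal)) ''
            {j | 0 < (A *ᵥ c) j}) ≤ (((b j - (A *ᵥ r z) j) / (A *ᵥ c) j : ℝ) : EReal) :=
        sInf_le ⟨j, hj, rfl⟩
      have := le_trans h2 hle
      simp only [EReal.coe_le_coe_iff, le_div_iff₀ hj] at this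
      linarith
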